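/- Let F, G : ℝ → ℝ be differentiable functions and consider on U the parabolic-separable Hamiltonian H = (p_a² + p_b²)/(2(a² + b²)) + (F(a) + G(b))/(a² + b²). Then the quadratic function I₂ = (a p_b − b p_a)·(a p_b + b p_a)/(a² + b²) + 2(a²G(b) − b²F(a))/(a² + b²) is a constant of motion: {I₂, H} = 0 at every point of U. -/

import Mathlib

noncomputable section

open Complex

/-! Partial derivatives of complex-valued functions on phase space `(a, b, pa, pb)`. -/

def pda (f : ℝ → ℝ → ℝ → ℝ → ℂ) (a b pa pb : ℝ) : ℂ := deriv (fun t => f t b pa pb) a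
def pdb (f : ℝ → ℝ → ℝ → ℝ → ℂ) (a b pa pb : ℝ) : ℂ := deriv (fun t => f a t pa pb) b
def pdpa (f : ℝ → ℝ → ℝ → ℝ → ℂ) (a b pa pb : ℝ) : ℂ := deriv (fun t => f a b t pb) pa
def pdpb (f : ℝ → ℝ → ℝ → ℝ → ℂ) (a b pa pb : ℝ) : ℂ := deriv (fun t => f a b pa t) pb

/-- Poisson bracket of two complex-valued functions on phase space. -/
def PB (f g : ℝ → ℝ → ℝ → ℝ → ℂ) (a b pa pb : ℝ) : ℂ :=
  pda f a b pa pb * pdpa g a b pa pb + pdb f a b pa pb * pdpb g a b pa pb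
    - pdpa f a b pa pb * pda g a b pa pb - pdpb f a b pa pb * pdb g a b pa pb

/-! Partial derivatives of real-valued functions on phase space. -/

def pdaR (f : ℝ → ℝ → ℝ → ℝ → ℝ) (a b pa pb : ℝ) : ℝ := deriv (fun t => f t b pa pb) a
def pdbR (f : ℝ → ℝ → ℝ → ℝ → ℝ) (a b pa pb : ℝ) : ℝ := deriv (fun t => f a t pa pb) b
def pdpaR (f : ℝ → ℝ → ℝ → ℝ → ℝ) (a b pa pb : ℝ) : ℝ := deriv (fun t => f a b t pb) pa
def pdpbR (f : ℝ → ℝ → ℝ → ℝ → ℝ) (a b pa pb : ℝ) : ℝ := deriv (fun t => f a b pa t) pb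

/-- Poisson bracket of two real-valued functions on phase space. -/
def PBR (f g : ℝ → ℝ → ℝ → ℝ → ℝ) (a b pa pb : ℝ) : ℝ :=
  pdaR f a b pa pb * pdpaR g a b pa pb + pdbR f a b pa pb * pdpbR g a b pa pb
    - pdpaR f a b pa pb * pdaR g a b pa pb - pdpbR f a b pa pb * pdbR g a b pa pb

/-- The angular momentum `J = a p_b - b p_a`. -/
def Jang (a b pa pb : ℝ) : ℝ := a * pb - b * pa

/-- The Kepler-related Hamiltonian `H_{K2}` (real-valued). -/
def HR (k1 k2 k3 : ℝ) (a b pa pb : ℝ) : ℝ :=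
  (pa ^ 2 + pb ^ 2) / (2 * (a ^ 2 + b ^ 2)) + (k1 + k2 * a + k3 * b) / (a ^ 2 + b ^ 2)

/-- The Kepler-related Hamiltonian, viewed as a complex-valued function. -/
def HC (k1 k2 k3 : ℝ) (a b pa pb : ℝ) : ℂ := (HR k1 k2 k3 a b pa pb : ℂ)

/-- The function `lambda = J/(a^2+b^2)^2`. -/
def lam (a b pa pb : ℝ) : ℝ := Jang a b pa pb / (a ^ 2 + b ^ 2) ^ 2

def A1 (a b pa pb : ℝ) : ℝ := (a ^ 2 - b ^ 2) / (a ^ 2 + b ^ 2)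
def A2 (a b pa pb : ℝ) : ℝ := 2 * a * b / (a ^ 2 + b ^ 2)

/-- The complex function `A = A1 + i A2`. -/
def Afun (a b pa pb : ℝ) : ℂ := (A1 a b pa pb : ℂ) + Complex.I * (A2 a b pa pb : ℂ)

def B1 (k1 : ℝ) (a b pa pb : ℝ) : ℝ := (Jang a b pa pb) ^ 2 / (a ^ 2 + b ^ 2) + k1
def B2 (k2 k3 : ℝ) (a b pa pb : ℝ) : ℝ :=
  Jang a b pa pb * (a * pa + b * pb) / (a ^ 2 + b ^ 2) + k3 * a - k2 * b

/-- The complex function `B = B1 + i B2`. -/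
def Bfun (k1 k2 k3 : ℝ) (a b pa pb : ℝ) : ℂ :=
  (B1 k1 a b pa pb : ℂ) + Complex.I * (B2 k2 k3 a b pa pb : ℂ)

def Ma1 (k1 k2 k3 : ℝ) (a b pa pb : ℝ) : ℝ :=
  (Jang a b pa pb * pa - (k2 * b - k3 * a) * a) / Real.sqrt (a ^ 2 + b ^ 2)
def Ma2 (k1 k2 k3 : ℝ) (a b pa pb : ℝ) : ℝ :=
  (-(Jang a b pa pb) * pb - 2 * k1 * a + (k2 * b - k3 * a) * b) / Real.sqrt (a ^ 2 + b ^ 2)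

/-- The complex function `M_a = M_{a1} + i M_{a2}`. -/
def Mafun (k1 k2 k3 : ℝ) (a b pa pb : ℝ) : ℂ :=
  (Ma1 k1 k2 k3 a b pa pb : ℂ) + Complex.I * (Ma2 k1 k2 k3 a b pa pb : ℂ)

def Mb1 (k1 k2 k3 : ℝ) (a b pa pb : ℝ) : ℝ :=
  (Jang a b pa pb * pb - (k2 * b - k3 * a) * b) / Real.sqrt (a ^ 2 + b ^ 2)
def Mb2 (k1 k2 k3 : ℝ) (a b pa pb : ℝ) : ℝ :=
  (Jang a b pa pb * pa - 2 * k1 * b - (k2 * b - k3 * a) * a) / Real.sqrt (a ^ 2 + b ^ 2)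

/-- The complex function `M_b = M_{b1} + i M_{b2}`. -/
def Mbfun (k1 k2 k3 : ℝ) (a b pa pb : ℝ) : ℂ :=
  (Mb1 k1 k2 k3 a b pa pb : ℂ) + Complex.I * (Mb2 k1 k2 k3 a b pa pb : ℂ)

/-- Directional derivative of a complex-valued function along a (real) tangent vector `v ∈ ℝ⁴`,
with coordinates ordered `(a, b, p_a, p_b)`. -/
def dd (f : ℝ → ℝ → ℝ → ℝ → ℂ) (a b pa pb : ℝ) (v : Fin 4 → ℝ) : ℂ :=
  pda f a b pa pb * (v 0 : ℂ) + pdb f a b pa pb * (v 1 : ℂ)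
    + pdpa f a b pa pb * (v 2 : ℂ) + pdpb f a b pa pb * (v 3 : ℂ)

/-- Directional derivative of a real-valued function along a tangent vector `v ∈ ℝ⁴`. -/
def ddR (f : ℝ → ℝ → ℝ → ℝ → ℝ) (a b pa pb : ℝ) (v : Fin 4 → ℝ) : ℝ :=
  pdaR f a b pa pb * v 0 + pdbR f a b pa pb * v 1
    + pdpaR f a b pa pb * v 2 + pdpbR f a b pa pb * v 3

/-- The 2-form `dF ∧ dG` evaluated on a pair of tangent vectors. -/
def wedgeR (f g : ℝ → ℝ → ℝ → ℝ → ℝ) (a b pa pb : ℝ) (u v : Fin 4 → ℝ) : ℝ :=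
  ddR f a b pa pb u * ddR g a b pa pb v - ddR f a b pa pb v * ddR g a b pa pb u

/-- Hamiltonian vector field of a real-valued function:
`(∂f/∂p_a, ∂f/∂p_b, -∂f/∂a, -∂f/∂b)`. -/
def hamVF (f : ℝ → ℝ → ℝ → ℝ → ℝ) (a b pa pb : ℝ) : Fin 4 → ℝ :=
  ![pdpaR f a b pa pb, pdpbR f a b pa pb, -pdaR f a b pa pb, -pdbR f a b pa pb]

/-- Hamiltonian vector field of a complex-valued function. -/
def hamVFC (f : ℝ → ℝ → ℝ → ℝ → ℂ) (a b pa pb : ℝ) : Fin 4 → ℂ :=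
  ![pdpa f a b pa pb, pdpb f a b pa pb, -pda f a b pa pb, -pdb f a b pa pb]

/-- The Hamiltonian vector field `Γ` of `H_{K2}`. -/
def GammaVF (k1 k2 k3 : ℝ) (a b pa pb : ℝ) : Fin 4 → ℝ := hamVF (HR k1 k2 k3) a b pa pb

/-- The real first integral `J₃ = Re (A·B*)`. -/
def J3fun (k1 k2 k3 : ℝ) (a b pa pb : ℝ) : ℝ :=
  (Afun a b pa pb * (starRingEnd ℂ) (Bfun k1 k2 k3 a b pa pb)).re

/-- The real first integral `J₄ = Im (A·B*)`. -/
def J4fun (k1 k2 k3 : ℝ) (a b pa pb : ℝ) : ℝ :=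
  (Afun a b pa pb * (starRingEnd ℂ) (Bfun k1 k2 k3 a b pa pb)).im

/-- The explicit coordinate expression for `J₃`. -/
def J3ex (k1 k2 k3 : ℝ) (a b pa pb : ℝ) : ℝ :=
  Jang a b pa pb * (a * pb + b * pa) / (a ^ 2 + b ^ 2)
    + 2 * ((k1 / 2) * ((a ^ 2 - b ^ 2) / (a ^ 2 + b ^ 2))
        - k2 * (a * b ^ 2 / (a ^ 2 + b ^ 2)) + k3 * (a ^ 2 * b / (a ^ 2 + b ^ 2)))

/-- The explicit coordinate expression for `J₄`. -/
def J4ex (k1 k2 k3 : ℝ) (a b pa pb : ℝ) : ℝ :=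
  Jang a b pa pb * (a * pa - b * pb) / (a ^ 2 + b ^ 2)
    - 2 * (k1 * (a * b / (a ^ 2 + b ^ 2))
        + (k2 / 2) * (b * (a ^ 2 - b ^ 2) / (a ^ 2 + b ^ 2))
        + (k3 / 2) * (a * (b ^ 2 - a ^ 2) / (a ^ 2 + b ^ 2)))

/-- The real first integral `K₃ = Re (M_a·M_b*)`. -/
def K3fun (k1 k2 k3 : ℝ) (a b pa pb : ℝ) : ℝ :=
  (Mafun k1 k2 k3 a b pa pb * (starRingEnd ℂ) (Mbfun k1 k2 k3 a b pa pb)).re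

/-- The real first integral `K₄ = Im (M_a·M_b*)`. -/
def K4fun (k1 k2 k3 : ℝ) (a b pa pb : ℝ) : ℝ :=
  (Mafun k1 k2 k3 a b pa pb * (starRingEnd ℂ) (Mbfun k1 k2 k3 a b pa pb)).im

/-- The real 2-form `Ω₁ = dA₁ ∧ dB₁ + dA₂ ∧ dB₂`. -/
def Om1 (k1 k2 k3 : ℝ) (a b pa pb : ℝ) (u v : Fin 4 → ℝ) : ℝ :=
  wedgeR A1 (B1 k1) a b pa pb u v + wedgeR A2 (B2 k2 k3) a b pa pb u v

/-- The real 2-form `Ω₂ = -dA₁ ∧ dB₂ + dA₂ ∧ dB₁`. -/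
def Om2 (k1 k2 k3 : ℝ) (a b pa pb : ℝ) (u v : Fin 4 → ℝ) : ℝ :=
  -wedgeR A1 (B2 k2 k3) a b pa pb u v + wedgeR A2 (B1 k1) a b pa pb u v

/-- The real 2-form `Ω_{M1} = dM_{a1} ∧ dM_{b1} + dM_{a2} ∧ dM_{b2}`. -/
def OmM1 (k1 k2 k3 : ℝ) (a b pa pb : ℝ) (u v : Fin 4 → ℝ) : ℝ :=
  wedgeR (Ma1 k1 k2 k3) (Mb1 k1 k2 k3) a b pa pb u v
    + wedgeR (Ma2 k1 k2 k3) (Mb2 k1 k2 k3) a b pa pb u v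

/-- The real 2-form `Ω_{M2} = -dM_{a1} ∧ dM_{b2} + dM_{a2} ∧ dM_{b1}`. -/
def OmM2 (k1 k2 k3 : ℝ) (a b pa pb : ℝ) (u v : Fin 4 → ℝ) : ℝ :=
  -wedgeR (Ma1 k1 k2 k3) (Mb2 k1 k2 k3) a b pa pb u v
    + wedgeR (Ma2 k1 k2 k3) (Mb1 k1 k2 k3) a b pa pb u v

/-- The standard basis vectors of `ℝ⁴`. -/
def ebasis (j : Fin 4) : Fin 4 → ℝ := Pi.single j 1


/-- for the parabolic-separable Hamiltonian
`H = (p_a² + p_b²)/(2(a² + b²)) + (F(a) + G(b))/(a² + b²)`, the quadratic function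
`I₂ = J·(a p_b + b p_a)/(a² + b²) + 2(a²G(b) − b²F(a))/(a² + b²)` is a constant of motion. -/
theorem stmt19 (F G : ℝ → ℝ) (hF : Differentiable ℝ F) (hG : Differentiable ℝ G)
    (a b pa pb : ℝ) (hU : a ^ 2 + b ^ 2 ≠ 0) :
    PBR (fun a b pa pb =>
        (a * pb - b * pa) * (a * pb + b * pa) / (a ^ 2 + b ^ 2)
          + 2 * (a ^ 2 * G b - b ^ 2 * F a) / (a ^ 2 + b ^ 2))
      (fun a b pa pb =>
        (pa ^ 2 + pb ^ 2) / (2 * (a ^ 2 + b ^ 2)) + (F a + G b) / (a ^ 2 + b ^ 2))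
      a b pa pb = 0 := by
  have hS : a ^ 2 + b ^ 2 ≠ 0 := hU
  have h2S : 2 * (a ^ 2 + b ^ 2) ≠ 0 := mul_ne_zero two_ne_zero hS
  -- partial a of I2
  have e1 : HasDerivAt (fun t : ℝ => t * pb - b * pa) pb a := by
    simpa using ((hasDerivAt_id a).mul_const pb).sub_const (b * pa)
  have e2 : HasDerivAt (fun t : ℝ => t * pb + b * pa) pb a := by
    simpa using ((hasDerivAt_id a).mul_const pb).add_const (b * pa)
  have e3 := e1.mul e2
  have e4 : HasDerivAt (fun t : ℝ => t ^ 2 * G b) (2 * a * G b) a := by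
    simpa using (hasDerivAt_pow 2 a).mul_const (G b)
  have e5 : HasDerivAt (fun t : ℝ => b ^ 2 * F t) (b ^ 2 * deriv F a) a :=
    ((hF a).hasDerivAt).const_mul (b ^ 2)
  have e7 : HasDerivAt (fun t : ℝ => t ^ 2 + b ^ 2) (2 * a) a := by
    simpa using (hasDerivAt_pow 2 a).add_const (b ^ 2)
  have hIa := ((e3.div e7 hS).add (((e4.sub e5).const_mul 2).div e7 hS)).deriv
  -- partial b of I2
  have f1 : HasDerivAt (fun t : ℝ => a * pb - t * pa) (-pa) b := by
    simpa using (((hasDerivAt_id b).mul_const pa).const_sub (a * pb))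
  have f2 : HasDerivAt (fun t : ℝ => a * pb + t * pa) pa b := by
    simpa using (((hasDerivAt_id b).mul_const pa).const_add (a * pb))
  have f3 := f1.mul f2
  have f4 : HasDerivAt (fun t : ℝ => a ^ 2 * G t) (a ^ 2 * deriv G b) b :=
    ((hG b).hasDerivAt).const_mul (a ^ 2)
  have f5 : HasDerivAt (fun t : ℝ => t ^ 2 * F a) (2 * b * F a) b := by
    simpa using (hasDerivAt_pow 2 b).mul_const (F a)
  have f7 : HasDerivAt (fun t : ℝ => a ^ 2 + t ^ 2) (2 * b) b := by
    simpa using (hasDerivAt_pow 2 b).const_add (a ^ 2)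
  have hIb := ((f3.div f7 hS).add (((f4.sub f5).const_mul 2).div f7 hS)).deriv
  -- partial pa of I2
  have g1 : HasDerivAt (fun t : ℝ => a * pb - b * t) (-b) pa := by
    simpa using (((hasDerivAt_id pa).const_mul b).const_sub (a * pb))
  have g2 : HasDerivAt (fun t : ℝ => a * pb + b * t) b pa := by
    simpa using (((hasDerivAt_id pa).const_mul b).const_add (a * pb))
  have hIpa := (((g1.mul g2).div_const (a ^ 2 + b ^ 2)).add
    (hasDerivAt_const pa (2 * (a ^ 2 * G b - b ^ 2 * F a) / (a ^ 2 + b ^ 2)))).deriv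
  -- partial pb of I2
  have k1 : HasDerivAt (fun t : ℝ => a * t - b * pa) a pb := by
    simpa using (((hasDerivAt_id pb).const_mul a).sub_const (b * pa))
  have k2 : HasDerivAt (fun t : ℝ => a * t + b * pa) a pb := by
    simpa using (((hasDerivAt_id pb).const_mul a).add_const (b * pa))
  have hIpb := (((k1.mul k2).div_const (a ^ 2 + b ^ 2)).add
    (hasDerivAt_const pb (2 * (a ^ 2 * G b - b ^ 2 * F a) / (a ^ 2 + b ^ 2)))).deriv
  -- partial a of H
  have m7 : HasDerivAt (fun t : ℝ => 2 * (t ^ 2 + b ^ 2)) (2 * (2 * a)) a := e7.const_mul 2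
  have m1 : HasDerivAt (fun t : ℝ => F t + G b) (deriv F a) a := ((hF a).hasDerivAt).add_const (G b)
  have hHa := (((hasDerivAt_const a (pa ^ 2 + pb ^ 2)).div m7 h2S).add (m1.div e7 hS)).deriv
  -- partial b of H
  have n7 : HasDerivAt (fun t : ℝ => 2 * (a ^ 2 + t ^ 2)) (2 * (2 * b)) b := f7.const_mul 2
  have n1 : HasDerivAt (fun t : ℝ => F a + G t) (deriv G b) b := ((hG b).hasDerivAt).const_add (F a)
  have hHb := (((hasDerivAt_const b (pa ^ 2 + pb ^ 2)).div n7 h2S).add (n1.div f7 hS)).deriv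
  -- partial pa of H
  have q1 : HasDerivAt (fun t : ℝ => t ^ 2 + pb ^ 2) (2 * pa) pa := by
    simpa using (hasDerivAt_pow 2 pa).add_const (pb ^ 2)
  have hHpa := ((q1.div_const (2 * (a ^ 2 + b ^ 2))).add
    (hasDerivAt_const pa ((F a + G b) / (a ^ 2 + b ^ 2)))).deriv
  -- partial pb of H
  have q2 : HasDerivAt (fun t : ℝ => pa ^ 2 + t ^ 2) (2 * pb) pb := by
    simpa using (hasDerivAt_pow 2 pb).const_add (pa ^ 2)
  have hHpb := ((q2.div_const (2 * (a ^ 2 + b ^ 2))).add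
    (hasDerivAt_const pb ((F a + G b) / (a ^ 2 + b ^ 2)))).deriv
  unfold PBR pdaR pdbR pdpaR pdpbR
  erw [hIa, hIb, hIpa, hIpb, hHa, hHb, hHpa, hHpb]
  simp only [Pi.mul_apply, Pi.sub_apply]
  field_simp
  ring
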